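/- Let q ≥ 2 and a real with |a| ≤ 2√q. Then the quadratic polynomial 1 - (a - q + 1)T + q²T² has both roots of absolute value 1/q; equivalently, |a - q + 1| ≤ 2q. -/

import Mathlib

theorem rank_two_RH
    (q a : ℝ) (hq : 2 ≤ q) (hHasse : |a| ≤ 2 * Real.sqrt q) :
    (∀ z : ℂ, 1 - ((a : ℂ) - q + 1) * z + (q : ℂ) ^ 2 * z ^ 2 = 0 → ‖z‖ = 1 / q) ∧
      |a - q + 1| ≤ 2 * q := by
  have hq0 : (0:ℝ) < q := by linarith
  have hsq : Real.sqrt q ^ 2 = q := Real.sq_sqrt hq0.le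
  have h2s : 2 * Real.sqrt q ≤ q + 1 := by nlinarith [sq_nonneg (Real.sqrt q - 1)]
  have habs := abs_le.mp hHasse
  have hb : |a - q + 1| ≤ 2 * q := by
    rw [abs_le]; constructor <;> nlinarith [Real.sqrt_nonneg q]
  refine ⟨?_, hb⟩
  intro z hz
  set b : ℝ := a - q + 1 with hbdef
  have hb2 : 4 * q ^ 2 - b ^ 2 ≥ 0 := by
    have := abs_le.mp hb
    nlinarith
  set s : ℝ := Real.sqrt (4 * q ^ 2 - b ^ 2) with hsdef
  have hs2 : s ^ 2 = 4 * q ^ 2 - b ^ 2 := Real.sq_sqrt hb2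
  have hs2c : (s:ℂ) ^ 2 = 4 * (q:ℂ) ^ 2 - (b:ℂ) ^ 2 := by exact_mod_cast congrArg Complex.ofReal hs2
  have hzb : 1 - (b:ℂ) * z + (q:ℂ) ^ 2 * z ^ 2 = 0 := by
    rw [hbdef]; push_cast; linear_combination hz
  have hfac : ((2*(q:ℂ)^2) * z - ((b:ℂ) + s * Complex.I)) *
      ((2*(q:ℂ)^2) * z - ((b:ℂ) - s * Complex.I)) = 0 := by
    linear_combination (4*(q:ℂ)^2) * hzb + hs2c - (s:ℂ)^2 * Complex.I_sq
  have hqc : (2*(q:ℂ)^2) ≠ 0 := by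
    have hq' : (q:ℂ) ≠ 0 := by exact_mod_cast hq0.ne'
    exact mul_ne_zero two_ne_zero (pow_ne_zero 2 hq')
  have habs4 : Real.sqrt (4 * q ^ 2) = 2 * q := by
    rw [show 4 * q ^ 2 = (2*q)^2 by ring, Real.sqrt_sq (by positivity)]
  have hden : ‖(2*(q:ℂ)^2)‖ = 2 * q ^ 2 := by
    rw [show (2*(q:ℂ)^2) = ((2*q^2 : ℝ) : ℂ) by push_cast; ring, Complex.norm_real, Real.norm_eq_abs,
      abs_of_pos (by positivity)]
  rcases mul_eq_zero.mp hfac with h | h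
  · have hz' : z = ((b:ℂ) + s * Complex.I) / (2*(q:ℂ)^2) := by
      rw [eq_div_iff hqc]; linear_combination h
    rw [hz', norm_div, hden, Complex.norm_add_mul_I]
    rw [show b ^ 2 + s ^ 2 = 4 * q ^ 2 by linarith, habs4]
    field_simp
  · have hz' : z = ((b:ℂ) - s * Complex.I) / (2*(q:ℂ)^2) := by
      rw [eq_div_iff hqc]; linear_combination h
    rw [hz', norm_div, hden, show ((b:ℂ) - s * Complex.I) = ((b:ℝ):ℂ) + ((-s : ℝ):ℂ) * Complex.I by push_cast; ring,
      Complex.norm_add_mul_I]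
    rw [show b ^ 2 + (-s) ^ 2 = 4 * q ^ 2 by nlinarith, habs4]
    field_simp
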